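/- Let n and d be positive integers, ℓ a Kupisch series of type Ã_{n-1}, f(i) = i - ℓ(i) - d + 1, and I = { i ∈ ℤ : (i mod n) ∈ J }. Then f maps I into I, and the restriction f|_I : I → I is a bijection. -/

import Mathlib

/-- The set of periodic points of the induced map `f̄ : ℤ/nℤ → ℤ/nℤ`. -/
def Jset (n : ℕ) (fbar : ZMod n → ZMod n) : Set (ZMod n) :=
  {j | ∃ N : ℕ, 1 ≤ N ∧ fbar^[N] j = j}

/-- The set of integers whose residue mod `n` lies in `J`. -/
def Iset (n : ℕ) (fbar : ZMod n → ZMod n) : Set ℤ :=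
  {i | (i : ZMod n) ∈ Jset n fbar}

/-- `f` maps `I` into itself and restricts to a bijection `I → I`. -/
theorem f_bijOn_I (n d : ℕ) (hn : 0 < n) (hd : 0 < d) (ℓ : ℤ → ℤ)
    (hK1 : ∀ i : ℤ, 1 ≤ ℓ i) (hK2 : ∀ i : ℤ, ℓ i ≤ ℓ (i - 1) + 1)
    (hKper : ∀ i : ℤ, ℓ (i + n) = ℓ i)
    (f : ℤ → ℤ) (hf : ∀ i : ℤ, f i = i - ℓ i - d + 1)
    (fbar : ZMod n → ZMod n)
    (hfbar : ∀ i : ℤ, fbar (i : ZMod n) = ((f i : ℤ) : ZMod n)) :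
    Set.MapsTo f (Iset n fbar) (Iset n fbar) ∧
      Set.BijOn f (Iset n fbar) (Iset n fbar) := by
  -- ℓ is periodic with period k*n for any integer k
  have hℓk : ∀ (k i : ℤ), ℓ (i + k * n) = ℓ i := by
    intro k
    induction k using Int.induction_on with
    | zero => intro i; simp
    | succ m ih =>
      intro i
      have h1 : i + ((m : ℤ) + 1) * n = (i + m * n) + n := by ring
      rw [h1, hKper, ih]
    | pred m ih =>
      intro i
      have h1 : i + (-(m : ℤ) - 1) * n + n = i + (-(m : ℤ)) * n := by ring
      have h2 := hKper (i + (-(m : ℤ) - 1) * n)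
      rw [h1] at h2
      rw [← ih i, ← h2]
  have hfk : ∀ (k i : ℤ), f (i + k * n) = f i + k * n := by
    intro k i
    rw [hf, hf, hℓk]
    ring
  -- congruent integers yield equal casts, and conversely
  have hmod : ∀ a b : ℤ, (a : ZMod n) = (b : ZMod n) → ∃ k : ℤ, b = a + k * n := by
    intro a b h
    have h2 : (n : ℤ) ∣ b - a := (ZMod.intCast_eq_intCast_iff a b n).mp h |>.dvd
    obtain ⟨k, hk⟩ := h2
    exact ⟨k, by rw [mul_comm] at hk; omega⟩
  -- fbar maps J into J
  have hJmap : ∀ j, j ∈ Jset n fbar → fbar j ∈ Jset n fbar := by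
    rintro j ⟨N, hN, hj⟩
    exact ⟨N, hN, by
      rw [← Function.iterate_succ_apply, Function.iterate_succ_apply', hj]⟩
  -- fbar is injective on J
  have hJinj : ∀ a b, a ∈ Jset n fbar → b ∈ Jset n fbar → fbar a = fbar b → a = b := by
    rintro a b ⟨N, hN, ha⟩ ⟨M, hM, hb⟩ hab
    have hpos : 0 < N * M := Nat.mul_pos hN hM
    have heq : (N * M - 1) + 1 = N * M := by omega
    have hKa : fbar^[(N * M - 1) + 1] a = a := by
      rw [heq, Function.iterate_mul]
      exact Function.iterate_fixed ha M
    have hKb : fbar^[(N * M - 1) + 1] b = b := by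
      rw [heq, mul_comm, Function.iterate_mul]
      exact Function.iterate_fixed hb N
    rw [Function.iterate_succ_apply] at hKa hKb
    rw [← hKa, ← hKb, hab]
  -- fbar restricted to J is surjective onto J
  have hJsurj : ∀ b, b ∈ Jset n fbar → ∃ a, a ∈ Jset n fbar ∧ fbar a = b := by
    rintro b ⟨N, hN, hb⟩
    refine ⟨fbar^[N - 1] b, ⟨N, hN, ?_⟩, ?_⟩
    · rw [← Function.iterate_add_apply, Nat.add_comm, Function.iterate_add_apply, hb]
    · have h := Function.iterate_succ_apply' fbar (N - 1) b
      rw [Nat.succ_eq_add_one, show N - 1 + 1 = N from by omega, hb] at h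
      exact h.symm
  -- MapsTo
  have hMaps : Set.MapsTo f (Iset n fbar) (Iset n fbar) := by
    intro i hi
    show ((f i : ℤ) : ZMod n) ∈ Jset n fbar
    rw [← hfbar i]
    exact hJmap _ hi
  refine ⟨hMaps, hMaps, ?_, ?_⟩
  -- InjOn
  · intro a ha b hb hfab
    have h1 : fbar (a : ZMod n) = fbar (b : ZMod n) := by
      rw [hfbar, hfbar, hfab]
    have h2 : (a : ZMod n) = (b : ZMod n) := hJinj _ _ ha hb h1
    obtain ⟨k, hk⟩ := hmod a b h2
    have h3 : f b = f a + k * n := by rw [hk, hfk]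
    have hkn : k * n = 0 := by omega
    have hk0 : k = 0 := by
      rcases mul_eq_zero.mp hkn with h | h
      · exact h
      · exfalso; omega
    omega
  -- SurjOn
  · intro b hb
    obtain ⟨j, hjJ, hjb⟩ := hJsurj _ hb
    obtain ⟨a0, ha0⟩ := ZMod.intCast_surjective j
    have hfa0 : ((f a0 : ℤ) : ZMod n) = (b : ZMod n) := by
      rw [← hfbar, ha0, hjb]
    obtain ⟨k, hk⟩ := hmod (f a0) b hfa0
    refine ⟨a0 + k * n, ?_, ?_⟩
    · show ((a0 + k * n : ℤ) : ZMod n) ∈ Jset n fbar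
      have : ((a0 + k * n : ℤ) : ZMod n) = (a0 : ZMod n) := by
        push_cast
        simp
      rw [this, ha0]
      exact hjJ
    · rw [hfk]; omega
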